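/- arXiv:2005.00900 — 4 statements merged into one kernel-verified Lean document; each statement's English description precedes it below -/
import Mathlib

section
/- Suppose b₁ = b₂ = b with 0 ≤ b < 1 and μ > (1 − b)/4. Then x = 1/2 is the unique real fixed point of the vector field: f(x, μ) = 0 implies x = 1/2. -/
noncomputable def rmField (b₁ b₂ x μ : ℝ) : ℝ :=
  x * (b₁ + x * (1 - b₁)) * (1 - μ - x) + (1 - x) * (1 + x * (b₂ - 1)) * (μ - x)

theorem stmt_6 (b μ : ℝ) (hb : 0 ≤ b) (hb' : b < 1) (hμ : (1 - b) / 4 < μ) :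
    ∀ x : ℝ, rmField b b x μ = 0 → x = 1/2 := by
  intro x hx
  have key : rmField b b x μ
      = -(2*x - 1) * ((1 - b) * (x - 1/2)^2 + (μ - (1 - b)/4)) := by
    unfold rmField; ring
  have hpos : (1 - b) * (x - 1/2)^2 + (μ - (1 - b)/4) > 0 := by
    have h1 : (1 - b) * (x - 1/2)^2 ≥ 0 := mul_nonneg (by linarith) (sq_nonneg _)
    linarith
  rw [key] at hx
  have : -(2*x - 1) = 0 := by
    rcases mul_eq_zero.mp hx with h | h
    · exact h
    · linarith
  linarith
end

section
/- Suppose b₁ = b₂ = b with 0 ≤ b < 1, 0 < μ < (1 − b)/4, and let a₁ = (1 − √(1 − 4μ/(1 − b)))/2 and a₃ = (1 + √(1 − 4μ/(1 − b)))/2. Then f(x, μ) > 0 for all x ∈ (0, a₁) and f(x, μ) < 0 for all x ∈ (a₃, 1). -/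
theorem stmt_7 (b μ : ℝ) (hb : 0 ≤ b) (hb' : b < 1) (hμ : 0 < μ)
    (hμ' : μ < (1 - b) / 4)
    (a₁ a₃ : ℝ)
    (ha₁ : a₁ = (1 - Real.sqrt (1 - 4 * μ / (1 - b))) / 2)
    (ha₃ : a₃ = (1 + Real.sqrt (1 - 4 * μ / (1 - b))) / 2) :
    (∀ x : ℝ, x ∈ Set.Ioo 0 a₁ → 0 < rmField b b x μ) ∧
    (∀ x : ℝ, x ∈ Set.Ioo a₃ 1 → rmField b b x μ < 0) := by
  have hb1 : 0 < 1 - b := by linarith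
  set s := Real.sqrt (1 - 4 * μ / (1 - b)) with hs
  have harg : 0 < 1 - 4 * μ / (1 - b) := by
    have : 4 * μ / (1 - b) < 1 := by
      rw [div_lt_one hb1]; linarith
    linarith
  have hspos : 0 < s := Real.sqrt_pos.mpr harg
  have hs2 : s ^ 2 = 1 - 4 * μ / (1 - b) := Real.sq_sqrt harg.le
  have hs1 : s < 1 := by
    have : 1 - 4 * μ / (1 - b) < 1 := by
      have : 0 < 4 * μ / (1 - b) := by positivity
      linarith
    nlinarith [hspos, hs2]
  have hsum : a₁ + a₃ = 1 := by rw [ha₁, ha₃]; ring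
  have hprod : (1 - b) * (a₁ * a₃) = μ := by
    have : a₁ * a₃ = (1 - s ^ 2) / 4 := by rw [ha₁, ha₃]; ring
    rw [this, hs2]
    field_simp
    ring
  have hfac : ∀ x : ℝ, rmField b b x μ = (1 - 2 * x) * ((1 - b) * ((x - a₁) * (x - a₃))) := by
    intro x
    rw [rmField]
    linear_combination (-(1 - 2*x)) * hprod + ((1 - 2*x) * (1 - b) * x) * hsum
  have ha₁half : a₁ < 1 / 2 := by rw [ha₁]; linarith
  have ha₃half : 1 / 2 < a₃ := by rw [ha₃]; linarith
  constructor
  · intro x hx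
    obtain ⟨hx0, hx1⟩ := hx
    rw [hfac x]
    have h1 : x - a₁ < 0 := by linarith
    have h2 : x - a₃ < 0 := by linarith
    have h3 : 0 < 1 - 2 * x := by linarith
    exact mul_pos h3 (mul_pos hb1 (mul_pos_of_neg_of_neg h1 h2))
  · intro x hx
    obtain ⟨hx0, hx1⟩ := hx
    rw [hfac x]
    have h1 : 0 < x - a₁ := by linarith
    have h2 : 0 < x - a₃ := by linarith
    have h3 : 1 - 2 * x < 0 := by linarith
    exact mul_neg_of_neg_of_pos h3 (mul_pos hb1 (mul_pos h1 h2))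
end

section
/- Lyapunov drift inequality near 0: suppose b₁ = b₂ = b with 0 ≤ b < 1, 0 < μ₁ < (1 − b)/4 with smallest fixed point a₁ of f(·, μ₁), and μ₂ > 0. Then there exists κ > 0 and constants c₁ > c₂ > 0 such that for both i = 1, 2 and all x ∈ (0, a₁), −c_i · f(x, μ_i)/x + q_{ij}(c_i − c_j)·log(x) < −κ, where j = 3 − i and q₁₂, q₂₁ > 0 are fixed, i.e., the generator applied to V(x, i) = −c_i log x is uniformly negative on (0, a₁). -/
set_option maxHeartbeats 1000000


theorem stmt_14 (b q₁₂ q₂₁ μ₁ μ₂ : ℝ) (hb : 0 ≤ b) (hb' : b < 1)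
    (hq₁₂ : 0 < q₁₂) (hq₂₁ : 0 < q₂₁)
    (hμ₁ : 0 < μ₁) (hμ₁' : μ₁ < (1 - b) / 4) (hμ₂ : (1 - b) / 4 < μ₂)
    (a₁ : ℝ) (ha₁ : a₁ = (1 - Real.sqrt (1 - 4 * μ₁ / (1 - b))) / 2) :
    ∃ κ > (0:ℝ), ∃ c₁ c₂ : ℝ, c₂ > 0 ∧ c₁ > c₂ ∧
      ∀ x ∈ Set.Ioo (0:ℝ) a₁,
        (-c₁ * rmField b b x μ₁ / x + q₁₂ * (c₁ - c₂) * Real.log x < -κ) ∧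
        (-c₂ * rmField b b x μ₂ / x + q₂₁ * (c₂ - c₁) * Real.log x < -κ) := by
  have h1b : 0 < 1 - b := by linarith
  have htpos : 0 < 1 - 4 * μ₁ / (1 - b) := by
    have : 4 * μ₁ / (1 - b) < 1 := by
      rw [div_lt_one h1b]; linarith
    linarith
  have ht1 : 1 - 4 * μ₁ / (1 - b) < 1 := by
    have : 0 < 4 * μ₁ / (1 - b) := by positivity
    linarith
  have hs0 : 0 < Real.sqrt (1 - 4 * μ₁ / (1 - b)) := Real.sqrt_pos.2 htpos
  have hs1 : Real.sqrt (1 - 4 * μ₁ / (1 - b)) < 1 := by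
    nlinarith [Real.sq_sqrt htpos.le, Real.sqrt_nonneg (1 - 4 * μ₁ / (1 - b))]
  have ha0 : 0 < a₁ := by rw [ha₁]; linarith
  have ha2 : a₁ < 1 / 2 := by rw [ha₁]; linarith
  have hsq : Real.sqrt (1 - 4 * μ₁ / (1 - b)) ^ 2 = 1 - 4 * μ₁ / (1 - b) :=
    Real.sq_sqrt htpos.le
  have hμeq : (1 - b) * (a₁ * (1 - a₁)) = μ₁ := by
    have hc : (1 - b) * (1 - b)⁻¹ = 1 := mul_inv_cancel₀ h1b.ne'
    rw [ha₁]
    linear_combination (-(1 - b) / 4) * hsq + μ₁ * hc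
  have hm0 : 0 < μ₂ - (1 - b) / 4 := by linarith
  have hsp : 0 < 1 - 2 * a₁ := by linarith
  -- opaque ε with q₂₁ * ε = (1-2a₁)(μ₂-(1-b)/4)/2
  obtain ⟨ε, hε0, hεq⟩ :
      ∃ ε : ℝ, 0 < ε ∧ q₂₁ * ε = (1 - 2 * a₁) * (μ₂ - (1 - b) / 4) / 2 := by
    refine ⟨(1 - 2 * a₁) * (μ₂ - (1 - b) / 4) / (2 * q₂₁), by positivity, ?_⟩
    field_simp
  have hla : Real.log a₁ < 0 := Real.log_neg ha0 (by linarith)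
  obtain ⟨κ, hκ0, hκ1, hκ2⟩ :
      ∃ κ : ℝ, 0 < κ ∧ κ ≤ q₁₂ * ε * (-Real.log a₁) ∧
        κ ≤ (1 - 2 * a₁) * (μ₂ - (1 - b) / 4) / 2 := by
    refine ⟨min (q₁₂ * ε * (-Real.log a₁)) ((1 - 2 * a₁) * (μ₂ - (1 - b) / 4) / 2),
      ?_, min_le_left _ _, min_le_right _ _⟩
    apply lt_min
    · have : 0 < -Real.log a₁ := by linarith
      positivity
    · positivity
  refine ⟨κ, hκ0, 1 + ε, 1, one_pos, by linarith, ?_⟩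
  rintro x ⟨hx0, hxa⟩
  have hx1 : x < 1 := by linarith
  have hlx : Real.log x < Real.log a₁ := Real.log_lt_log hx0 hxa
  constructor
  · -- first inequality
    have hf1 : rmField b b x μ₁ = (1 - 2 * x) * (1 - b) * (a₁ - x) * (1 - a₁ - x) := by
      unfold rmField
      linear_combination (2 * x - 1) * hμeq
    have hf1pos : 0 < rmField b b x μ₁ := by
      rw [hf1]
      have h1 : 0 < 1 - 2 * x := by linarith
      have h2 : 0 < a₁ - x := by linarith
      have h3 : 0 < 1 - a₁ - x := by linarith
      positivity
    have hdiv : -(1 + ε) * rmField b b x μ₁ / x ≤ 0 := by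
      apply div_nonpos_of_nonpos_of_nonneg _ hx0.le
      nlinarith
    have hlog : q₁₂ * ((1 + ε) - 1) * Real.log x < -κ := by
      have h1 : q₁₂ * ε * Real.log x < q₁₂ * ε * Real.log a₁ := by
        apply mul_lt_mul_of_pos_left hlx (by positivity)
      have h2 : ((1:ℝ) + ε) - 1 = ε := by ring
      rw [h2]
      nlinarith [hκ1]
    linarith
  · -- second inequality
    have hf2 : rmField b b x μ₂ =
        (1 - 2 * x) * ((1 - b) * (x - 1/2) ^ 2 + (μ₂ - (1 - b) / 4)) := by
      unfold rmField; ring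
    have hf2lb : (1 - 2 * a₁) * (μ₂ - (1 - b) / 4) < rmField b b x μ₂ := by
      rw [hf2]
      have h1 : 1 - 2 * a₁ < 1 - 2 * x := by linarith
      have h2 : 0 ≤ (1 - b) * (x - 1/2) ^ 2 := by positivity
      nlinarith
    have hinv : -Real.log x ≤ x⁻¹ - 1 := by
      have h := Real.log_le_sub_one_of_pos (inv_pos.2 hx0)
      rwa [Real.log_inv] at h
    have hxi : x * x⁻¹ = 1 := mul_inv_cancel₀ hx0.ne'
    have h2 : -1 * rmField b b x μ₂ / x < -κ - q₂₁ * (1 - (1 + ε)) * Real.log x := by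
      rw [div_lt_iff₀ hx0]
      have hmul : x * (-Real.log x) ≤ x * (x⁻¹ - 1) :=
        mul_le_mul_of_nonneg_left hinv hx0.le
      have hmul' : -(x * Real.log x) ≤ 1 - x := by nlinarith [hmul, hxi]
      have hκx : κ * x ≤ (1 - 2 * a₁) * (μ₂ - (1 - b) / 4) / 2 * x :=
        mul_le_mul_of_nonneg_right hκ2 hx0.le
      have h3 : q₂₁ * ε * (x * Real.log x) =
          (1 - 2 * a₁) * (μ₂ - (1 - b) / 4) / 2 * (x * Real.log x) := by
        rw [hεq]
      have h4 : (1 - 2 * a₁) * (μ₂ - (1 - b) / 4) / 2 * (-(x * Real.log x)) ≤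
          (1 - 2 * a₁) * (μ₂ - (1 - b) / 4) / 2 * (1 - x) :=
        mul_le_mul_of_nonneg_left hmul' (by positivity)
      nlinarith [hκx, h3, h4, hf2lb, hx0, mul_pos hsp hm0]
    linarith
end

section
/- Monotone flow toward the stable fixed point: suppose b₁ = b₂ = b with 0 ≤ b < 1 and 0 < μ < (1 − b)/4, with fixed points a₁ < 1/2 < a₃, and let x : [0, ∞) → ℝ solve x' = f(x, μ) with x(0) ∈ (a₁, 1/2). Then x(t) ∈ (a₁, 1/2) for all t ≥ 0 and x is strictly decreasing, converging to a₁ as t → ∞. -/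
set_option maxHeartbeats 1000000 in
theorem stmt_18 (b μ : ℝ) (hb : 0 ≤ b) (hb' : b < 1) (hμ : 0 < μ)
    (hμ' : μ < (1 - b) / 4)
    (a₁ : ℝ) (ha₁ : a₁ = (1 - Real.sqrt (1 - 4 * μ / (1 - b))) / 2)
    (x : ℝ → ℝ)
    (hsol : ∀ t, 0 ≤ t → HasDerivAt x (rmField b b (x t) μ) t)
    (h0 : x 0 ∈ Set.Ioo a₁ (1/2)) :
    (∀ t, 0 ≤ t → x t ∈ Set.Ioo a₁ (1/2)) ∧
    StrictAntiOn x (Set.Ici 0) ∧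
    Filter.Tendsto x Filter.atTop (nhds a₁) := by
  have hb1 : (0:ℝ) < 1 - b := by linarith
  set s := Real.sqrt (1 - 4 * μ / (1 - b)) with hs_def
  have hdivlt : 4 * μ / (1 - b) < 1 := by
    rw [div_lt_one hb1]; linarith
  have hdivpos : 0 < 4 * μ / (1 - b) := by positivity
  have harg0 : 0 ≤ 1 - 4 * μ / (1 - b) := by linarith
  have hs2 : s ^ 2 = 1 - 4 * μ / (1 - b) := Real.sq_sqrt harg0
  have hs0 : 0 < s := Real.sqrt_pos.mpr (by linarith)
  have hslt1 : s < 1 := by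
    nlinarith [Real.sqrt_nonneg (1 - 4 * μ / (1 - b))]
  have ha₁pos : 0 < a₁ := by rw [ha₁]; linarith
  have ha₁half : a₁ < 1/2 := by rw [ha₁]; linarith
  have hs2' : (1 - b) * s ^ 2 = 1 - b - 4 * μ := by
    rw [hs2]; field_simp
  have hroot : (1 - b) * a₁ ^ 2 - (1 - b) * a₁ + μ = 0 := by
    rw [ha₁]; linear_combination (1/4 : ℝ) * hs2'
  -- factored form of the vector field
  have hF : ∀ y : ℝ, rmField b b y μ = (1 - 2*y) * (1 - b) * ((y - a₁) * (y - (1 - a₁))) := by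
    intro y
    simp only [rmField]
    linear_combination (1 - 2*y) * hroot
  have hFneg : ∀ y : ℝ, a₁ < y → y < 1/2 → rmField b b y μ < 0 := by
    intro y hy1 hy2
    rw [hF]
    have h1 : 0 < 1 - 2*y := by linarith
    have h2 : 0 < y - a₁ := by linarith
    have h3 : y - (1 - a₁) < 0 := by linarith
    exact mul_neg_of_pos_of_neg (mul_pos h1 hb1) (mul_neg_of_pos_of_neg h2 h3)
  have hFa : rmField b b a₁ μ = 0 := by rw [hF]; ring
  have hFhalf : rmField b b (1/2 : ℝ) μ = 0 := by rw [hF]; norm_num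
  -- derivative of the vector field
  have hder : ∀ y : ℝ, HasDerivAt (fun z => rmField b b z μ)
      ((1 - b) * (-6*y^2 + 6*y - 1) - 2*μ) y := by
    intro y
    have h2 := (((hasDerivAt_pow 3 y).const_mul (-2*(1-b))).add
      ((hasDerivAt_pow 2 y).const_mul (3*(1-b)))).add
      (((hasDerivAt_id y).const_mul (-((1-b)+2*μ))).add_const μ)
    have h3 : HasDerivAt (fun z : ℝ => -2*(1-b)*z^3 + (3*(1-b)*z^2 + (-((1-b)+2*μ)*(id z) + μ)))
        ((1 - b) * (-6*y^2 + 6*y - 1) - 2*μ) y := by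
      have h4 := (((hasDerivAt_pow 3 y).const_mul (-2*(1-b))).add
        (((hasDerivAt_pow 2 y).const_mul (3*(1-b))).add
          (((hasDerivAt_id y).const_mul (-((1-b)+2*μ))).add_const μ)))
      exact h4.congr_deriv (by push_cast; ring)
    have hfeq : ∀ z : ℝ, rmField b b z μ
        = -2*(1-b)*z^3 + (3*(1-b)*z^2 + (-((1-b)+2*μ)*(id z) + μ)) := by
      intro z; simp only [rmField, id_eq]; ring
    simpa only [hfeq] using h3
  -- Lipschitz bound on Icc a₁ (1/2)
  have hIccsub : Set.Icc a₁ (1/2 : ℝ) ⊆ Set.Icc (0:ℝ) 1 :=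
    Set.Icc_subset_Icc ha₁pos.le (by norm_num)
  have lip : LipschitzOnWith 2 (fun z => rmField b b z μ) (Set.Icc (0:ℝ) 1) := by
    apply (convex_Icc (0:ℝ) 1).lipschitzOnWith_of_nnnorm_hasDerivWithin_le
      (f' := fun y => (1 - b) * (-6*y^2 + 6*y - 1) - 2*μ)
      (fun y _ => (hder y).hasDerivWithinAt)
    intro y hy
    rw [← NNReal.coe_le_coe, coe_nnnorm, Real.norm_eq_abs]
    push_cast
    rw [abs_le]
    obtain ⟨hy0, hy1⟩ := hy
    constructor
    · nlinarith [mul_nonneg hb1.le (sq_nonneg (2*y - 1)),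
        mul_nonneg hb1.le (mul_nonneg hy0 (by linarith : (0:ℝ) ≤ 1 - y))]
    · nlinarith [mul_nonneg hb1.le (sq_nonneg (2*y - 1)),
        mul_nonneg hb1.le (mul_nonneg hy0 (by linarith : (0:ℝ) ≤ 1 - y))]
  have lip' : LipschitzOnWith 2 (fun z => rmField b b z μ) (Set.Icc a₁ (1/2 : ℝ)) :=
    lip.mono hIccsub
  have hcont : ∀ t : ℝ, 0 ≤ t → ContinuousAt x t := fun t ht => (hsol t ht).continuousAt
  -- invariance
  have inv : ∀ t, 0 ≤ t → x t ∈ Set.Ioo a₁ (1/2) := by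
    by_contra hcon
    push_neg at hcon
    obtain ⟨t₁, ht₁, hxt₁⟩ := hcon
    set S := {t : ℝ | t ∈ Set.Icc 0 t₁ ∧ x t ∉ Set.Ioo a₁ (1/2)} with hS_def
    have hSne : S.Nonempty := ⟨t₁, ⟨ht₁, le_refl t₁⟩, hxt₁⟩
    have hSbdd : BddBelow S := ⟨0, fun t ht => ht.1.1⟩
    have hScl : IsClosed S := by
      have : S = Set.Icc 0 t₁ ∩ x ⁻¹' (Set.Ioo a₁ (1/2))ᶜ := by
        ext t; simp [hS_def, Set.mem_Icc]
      rw [this]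
      exact ContinuousOn.preimage_isClosed_of_isClosed
        (fun t ht => (hcont t ht.1).continuousWithinAt) isClosed_Icc
        isOpen_Ioo.isClosed_compl
    set t₀ := sInf S with ht₀_def
    have ht₀S : t₀ ∈ S := hScl.csInf_mem hSne hSbdd
    have ht₀0 : 0 ≤ t₀ := ht₀S.1.1
    have hpre : ∀ t, 0 ≤ t → t < t₀ → x t ∈ Set.Ioo a₁ (1/2) := by
      intro t h0t htt₀
      by_contra h
      exact absurd (csInf_le hSbdd ⟨⟨h0t, le_trans htt₀.le ht₀S.1.2⟩, h⟩) (not_le.mpr htt₀)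
    have ht₀pos : 0 < t₀ := by
      rcases eq_or_lt_of_le ht₀0 with h | h
      · exact absurd (h ▸ h0) ht₀S.2
      · exact h
    have hmem : x t₀ ∈ Set.Icc a₁ (1/2) := by
      have htend : Filter.Tendsto x (nhdsWithin t₀ (Set.Iio t₀)) (nhds (x t₀)) :=
        (hcont t₀ ht₀0).continuousWithinAt
      have hev : ∀ᶠ t in nhdsWithin t₀ (Set.Iio t₀), x t ∈ Set.Icc a₁ (1/2) := by
        filter_upwards [Ioo_mem_nhdsLT_of_mem (Set.mem_Ioc.mpr ⟨ht₀pos, le_refl t₀⟩)] with t ht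
        exact Set.Ioo_subset_Icc_self (hpre t ht.1.le ht.2)
      exact isClosed_Icc.mem_of_tendsto htend hev
    have hFt₀ : rmField b b (x t₀) μ = 0 := by
      rcases eq_or_lt_of_le hmem.1 with h | h
      · rw [← h]; exact hFa
      · rcases eq_or_lt_of_le hmem.2 with h' | h'
        · rw [h']; exact hFhalf
        · exact absurd ⟨h, h'⟩ ht₀S.2
    have key : Set.EqOn x (fun _ => x t₀) (Set.Icc 0 t₀) := by
      apply ODE_solution_unique_of_mem_Icc_left
        (v := fun _ z => rmField b b z μ) (s := fun _ => Set.Icc a₁ (1/2)) (K := 2)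
        (fun _ _ => lip')
        (fun t ht => (hcont t ht.1).continuousWithinAt)
        (fun t ht => (hsol t ht.1.le).hasDerivWithinAt)
        (fun t ht => by
          rcases eq_or_lt_of_le ht.2 with h | h
          · rw [h]; exact hmem
          · exact Set.Ioo_subset_Icc_self (hpre t ht.1.le h))
        continuousOn_const
        (fun t ht => by
          simpa [hFt₀] using (hasDerivWithinAt_const t (Set.Iic t) (x t₀)))
        (fun t ht => hmem)
        rfl
    have hx0 : x 0 = x t₀ := key (Set.left_mem_Icc.mpr ht₀pos.le)
    rw [hx0] at h0
    exact ht₀S.2 h0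
  -- strict monotonicity
  have hanti : StrictAntiOn x (Set.Ici 0) := by
    apply strictAntiOn_of_deriv_neg (convex_Ici 0)
      (fun t ht => (hcont t ht).continuousWithinAt)
    intro t ht
    rw [interior_Ici] at ht
    rw [(hsol t ht.le).deriv]
    exact hFneg _ (inv t ht.le).1 (inv t ht.le).2
  refine ⟨inv, hanti, ?_⟩
  -- convergence
  set g := fun t : ℝ => x (max t 0) with hg_def
  have hga : Antitone g := by
    intro t₁ t₂ h
    exact hanti.antitoneOn (Set.mem_Ici.mpr (le_max_right t₁ 0))
      (Set.mem_Ici.mpr (le_max_right t₂ 0)) (max_le_max h le_rfl)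
  have hbdd : BddBelow (Set.range g) := by
    refine ⟨a₁, ?_⟩
    rintro _ ⟨t, rfl⟩
    exact (inv _ (le_max_right t 0)).1.le
  have hgt : Filter.Tendsto g Filter.atTop (nhds (⨅ t, g t)) := tendsto_atTop_ciInf hga hbdd
  set L := ⨅ t, g t with hL_def
  have hxg : x =ᶠ[Filter.atTop] g := by
    filter_upwards [Filter.eventually_ge_atTop (0:ℝ)] with t ht
    simp [hg_def, max_eq_left ht]
  have hxt : Filter.Tendsto x Filter.atTop (nhds L) := hgt.congr' hxg.symm
  have hbddrange : BddBelow (Set.range g) := hbdd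
  have hLle : ∀ t : ℝ, 0 ≤ t → L ≤ x t := by
    intro t ht
    have := ciInf_le hbdd t
    simpa [hg_def, max_eq_left ht] using this
  have ha₁L : a₁ ≤ L := le_ciInf fun t => (inv _ (le_max_right t 0)).1.le
  have hL2 : L < 1/2 := by
    have h1 : L ≤ x 0 := by simpa [hg_def] using ciInf_le hbdd (0:ℝ)
    exact lt_of_le_of_lt h1 h0.2
  suffices hLa : L = a₁ by rw [← hLa]; exact hxt
  by_contra hne
  have hLgt : a₁ < L := lt_of_le_of_ne ha₁L (Ne.symm hne)
  have hFL : rmField b b L μ < 0 := hFneg L hLgt hL2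
  set c := -rmField b b L μ / 2 with hc_def
  have hc0 : 0 < c := by rw [hc_def]; linarith
  have hPcont : Continuous (fun z => rmField b b z μ) := by
    simp only [rmField]; fun_prop
  have hnbhd : {z : ℝ | rmField b b z μ < -c} ∈ nhds L :=
    hPcont.continuousAt (Iio_mem_nhds (by rw [hc_def]; linarith))
  have hevF : ∀ᶠ t in Filter.atTop, rmField b b (x t) μ < -c := hxt.eventually hnbhd
  obtain ⟨t₁, ht₁⟩ := (hevF.and (Filter.eventually_ge_atTop (0:ℝ))).exists_forall_of_atTop
  have ht₁0 : 0 ≤ t₁ := (ht₁ t₁ le_rfl).2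
  have hdec : AntitoneOn (fun t => x t + c * t) (Set.Ici t₁) := by
    apply antitoneOn_of_deriv_nonpos (convex_Ici t₁)
    · exact ContinuousOn.add
        (fun t ht => (hcont t (le_trans ht₁0 ht)).continuousWithinAt)
        (continuous_const.mul continuous_id).continuousOn
    · intro t ht
      rw [interior_Ici] at ht
      have hd : HasDerivAt (fun t => x t + c * t) (rmField b b (x t) μ + c) t := by
        have h1 := (hsol t (le_trans ht₁0 ht.le)).add
          ((hasDerivAt_id t).const_mul c)
        exact h1.congr_deriv (by simp)
      exact hd.differentiableAt.differentiableWithinAt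
    · intro t ht
      rw [interior_Ici] at ht
      have hd : HasDerivAt (fun t => x t + c * t) (rmField b b (x t) μ + c) t := by
        have h1 := (hsol t (le_trans ht₁0 ht.le)).add
          ((hasDerivAt_id t).const_mul c)
        exact h1.congr_deriv (by simp)
      rw [hd.deriv]
      have := (ht₁ t ht.le).1
      linarith
  set T := t₁ + (x t₁ - a₁ + 1) / c with hT_def
  have hxT : a₁ < x t₁ := (inv t₁ ht₁0).1
  have hTge : t₁ ≤ T := by
    rw [hT_def]
    have : 0 < (x t₁ - a₁ + 1) / c := div_pos (by linarith) hc0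
    linarith
  have hstep : x T + c * T ≤ x t₁ + c * t₁ :=
    hdec (Set.self_mem_Ici) (Set.mem_Ici.mpr hTge) hTge
  have hcT : c * (T - t₁) = x t₁ - a₁ + 1 := by
    rw [hT_def]
    field_simp
    ring
  have hTval : x T ≤ a₁ - 1 := by linarith [hstep, hcT]
  have hT0 : 0 ≤ T := le_trans ht₁0 hTge
  have := (inv T hT0).1
  linarith
end
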